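/- arXiv:0912.1392 — 2 statements merged into one kernel-verified Lean document; each statement's English description precedes it below -/
import Mathlib

section
/- Fix l_2 > l_0, δ > 0, and ε = 1/N, and run the recursion with l = l_2. Then s_{1/ε} < l_2; consequently w_k ≥ δ for all 0 ≤ k ≤ 1/ε, and −λ_- l_2 − Σ_{k=0}^{1/ε − 1} (π²σ_Q²/(2 w_k²)) ε > 0. -/
set_option maxHeartbeats 2000000
open Real

/-- The recursion `s₀ = 0`, `s_k = s_{k-1} - (π²σ²/(2 λ w_{k-1}²)) ε` with
`w_k = l + δ - s_k`. -/
noncomputable def sSeq (lamm σ2 l δ ε : ℝ) : ℕ → ℝ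
  | 0 => 0
  | k + 1 => sSeq lamm σ2 l δ ε k -
      Real.pi ^ 2 * σ2 / (2 * lamm * (l + δ - sSeq lamm σ2 l δ ε k) ^ 2) * ε

/-- `w_k = l + δ - s_k`. -/
noncomputable def wSeq (lamm σ2 l δ ε : ℝ) (k : ℕ) : ℝ :=
  l + δ - sSeq lamm σ2 l δ ε k

lemma wSeq_zero (lamm σ2 l δ ε : ℝ) : wSeq lamm σ2 l δ ε 0 = l + δ := by
  simp [wSeq, sSeq]

lemma wSeq_succ (lamm σ2 l δ ε : ℝ) (k : ℕ) :
    wSeq lamm σ2 l δ ε (k + 1) = wSeq lamm σ2 l δ ε k +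
      Real.pi ^ 2 * σ2 / (2 * lamm * (wSeq lamm σ2 l δ ε k) ^ 2) * ε := by
  simp only [wSeq, sSeq]; ring

lemma pos_of_cube_pos (x : ℝ) (hx : 0 < x ^ 3) : 0 < x := by
  by_contra h
  push_neg at h
  nlinarith [sq_nonneg x, mul_nonneg (sq_nonneg x) (neg_nonneg.mpr h)]

/-- For `l₂ > l₀` the recursion stays below `l₂`: `s_{1/ε} < l₂`, hence
`w_k ≥ δ` for all `0 ≤ k ≤ 1/ε`, and
`-λ₋ l₂ - Σ_{k=0}^{1/ε-1} (π²σ²/(2 w_k²)) ε > 0`. -/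
theorem sSeq_stays_below_l2
    (lamm σ2 : ℝ) (hlamm : lamm < 0) (hσ2 : 0 < σ2)
    (l0 : ℝ) (hl0 : l0 = (3 * Real.pi ^ 2 * σ2 / (-2 * lamm)) ^ ((1:ℝ)/3))
    (l2 δ : ℝ) (hl2 : l0 < l2) (hδ : 0 < δ)
    (N : ℕ) (hN : 1 ≤ N) (ε : ℝ) (hε : ε = 1 / (N : ℝ)) :
    sSeq lamm σ2 l2 δ ε N < l2 ∧
    (∀ k ≤ N, δ ≤ wSeq lamm σ2 l2 δ ε k) ∧
    0 < -lamm * l2 -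
      ∑ k ∈ Finset.range N, Real.pi ^ 2 * σ2 / (2 * wSeq lamm σ2 l2 δ ε k ^ 2) * ε := by
  have hπ : 0 < Real.pi := Real.pi_pos
  have h2l : 0 < -2 * lamm := by linarith
  set c : ℝ := Real.pi ^ 2 * σ2 / (-2 * lamm) with hc_def
  have hc : 0 < c := div_pos (by positivity) h2l
  have hNpos : (0:ℝ) < N := by
    have : (1:ℝ) ≤ N := by exact_mod_cast hN
    linarith
  have hεpos : 0 < ε := by rw [hε]; positivity
  have hεN : ε * N = 1 := by rw [hε]; field_simp
  have hl0pos : 0 < l0 := by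
    rw [hl0]
    exact Real.rpow_pos_of_pos (div_pos (by positivity) h2l) _
  have hl0cube : l0 ^ 3 = 3 * c := by
    rw [hl0, show (3:ℝ) * Real.pi ^ 2 * σ2 / (-2 * lamm) = 3 * c by
      rw [hc_def]; ring]
    rw [← Real.rpow_natCast ((3 * c) ^ ((1:ℝ)/3)) 3,
      ← Real.rpow_mul (by positivity)]
    norm_num
  have hl2pos : 0 < l2 := lt_trans hl0pos hl2
  have h3c : 3 * c < l2 ^ 3 := by
    rw [← hl0cube]
    exact pow_lt_pow_left₀ hl2 hl0pos.le (by norm_num)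
  have hδ3 : δ ^ 3 < (l2 + δ) ^ 3 - 3 * c := by
    nlinarith [mul_pos (mul_pos hl2pos hl2pos) hδ, mul_pos hl2pos (mul_pos hδ hδ)]
  have key : ∀ x : ℝ, Real.pi ^ 2 * σ2 / (2 * lamm * x ^ 2) = -(c / x ^ 2) := by
    intro x
    rw [hc_def, div_div, ← div_neg]
    congr 1
    ring
  have hstep : ∀ k, wSeq lamm σ2 l2 δ ε (k + 1) =
      wSeq lamm σ2 l2 δ ε k - c * ε / (wSeq lamm σ2 l2 δ ε k) ^ 2 := by
    intro k
    rw [wSeq_succ, key]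
    ring
  clear_value c
  -- main invariant
  have main : ∀ k, k ≤ N →
      (l2 + δ) ^ 3 - 3 * c * ε * k ≤ (wSeq lamm σ2 l2 δ ε k) ^ 3 ∧
      0 < wSeq lamm σ2 l2 δ ε k := by
    intro k
    induction k with
    | zero =>
      intro _
      rw [wSeq_zero]
      constructor
      · push_cast
        simp
      · linarith
    | succ k ih =>
      intro hk
      obtain ⟨hlb, hpos⟩ := ih (Nat.le_of_succ_le hk)
      rw [hstep k]
      set w := wSeq lamm σ2 l2 δ ε k with hwdef
      clear_value w
      have hkle : (k:ℝ) ≤ (N:ℝ) - 1 := by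
        have : ((k:ℝ) + 1) ≤ N := by exact_mod_cast hk
        linarith
      have hεk : ε * k ≤ 1 - ε := by nlinarith
      have h3ck : 3 * c * ε * (k:ℝ) ≤ 3 * c - 3 * c * ε := by
        nlinarith [mul_le_mul_of_nonneg_left hεk (by positivity : (0:ℝ) ≤ 3 * c)]
      have hwk3 : 3 * c * ε < w ^ 3 := by
        have h0 : 0 < 3 * c * ε := by positivity
        nlinarith [pow_pos hδ 3]
      have hw2 : (0:ℝ) < w ^ 2 := pow_pos hpos 2
      have hcube : w ^ 3 - 3 * (c * ε) ≤ (w - c * ε / w ^ 2) ^ 3 := by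
        have hrepr : w - c * ε / w ^ 2 = (w ^ 3 - c * ε) / w ^ 2 := by
          field_simp
        rw [hrepr, div_pow, le_div_iff₀ (by positivity)]
        have hcε : (0:ℝ) < c * ε := mul_pos hc hεpos
        have hkey : (0:ℝ) ≤ (c * ε) ^ 2 * (3 * w ^ 3 - c * ε) :=
          mul_nonneg (sq_nonneg _) (by linarith)
        nlinarith [hkey]
      constructor
      · push_cast
        linarith [hcube, hlb]
      · apply pos_of_cube_pos
        linarith [hcube, hwk3]
  have hδw : ∀ k ≤ N, δ < wSeq lamm σ2 l2 δ ε k := by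
    intro k hk
    obtain ⟨hlb, hpos⟩ := main k hk
    have hkN : (k:ℝ) ≤ N := by exact_mod_cast hk
    have hεk : ε * k ≤ 1 := by nlinarith
    have h3ck : 3 * c * ε * (k:ℝ) ≤ 3 * c := by
      nlinarith [mul_le_mul_of_nonneg_left hεk (by positivity : (0:ℝ) ≤ 3 * c)]
    have hδ3' : δ ^ 3 < (wSeq lamm σ2 l2 δ ε k) ^ 3 := by linarith
    by_contra h
    push_neg at h
    have := pow_le_pow_left₀ hpos.le h 3
    linarith
  have hsN : sSeq lamm σ2 l2 δ ε N < l2 := by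
    have := hδw N le_rfl
    simp only [wSeq] at this
    linarith
  have habs : ∀ x : ℝ, lamm * (Real.pi ^ 2 * σ2 / (2 * lamm * x) * ε) =
      Real.pi ^ 2 * σ2 / (2 * x) * ε := by
    intro x
    rcases eq_or_ne x 0 with h | h
    · simp [h]
    · have hlne : lamm ≠ 0 := ne_of_lt hlamm
      field_simp
  have hsum : ∀ n : ℕ, ∑ k ∈ Finset.range n,
      Real.pi ^ 2 * σ2 / (2 * wSeq lamm σ2 l2 δ ε k ^ 2) * ε =
      -lamm * sSeq lamm σ2 l2 δ ε n := by
    intro n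
    induction n with
    | zero => simp [sSeq]
    | succ n ih =>
      rw [Finset.sum_range_succ, ih,
        show sSeq lamm σ2 l2 δ ε (n + 1) = sSeq lamm σ2 l2 δ ε n -
          Real.pi ^ 2 * σ2 / (2 * lamm * (l2 + δ - sSeq lamm σ2 l2 δ ε n) ^ 2) * ε
          from rfl]
      have := habs ((l2 + δ - sSeq lamm σ2 l2 δ ε n) ^ 2)
      simp only [wSeq]
      linarith [this]
  refine ⟨hsN, fun k hk => (hδw k hk).le, ?_⟩
  rw [hsum N]
  nlinarith [mul_pos (neg_pos.mpr hlamm) (sub_pos.mpr hsN)]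
end

section
/- Fix l_1 < l_0 and δ > 0 with l_1 + δ < l_0, and run the recursion with l = l_1. Then there exist γ > 0 and ε_0 > 0 such that for every ε = 1/N with ε < ε_0, the set {k ≤ 1/ε : s_k ≥ l_1} is nonempty and its minimum K satisfies Kε < 1 − γ. -/
open Real

lemma sSeq_cube_step (lamm σ2 l δ ε : ℝ) (hlamm : lamm < 0) (hσ2 : 0 < σ2)
    (hδ : 0 < δ) (hε : 0 < ε) (c : ℝ) (hc : c = Real.pi ^ 2 * σ2 / (-2 * lamm))
    (k : ℕ) (hw : δ ≤ l + δ - sSeq lamm σ2 l δ ε k) :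
    (l + δ - sSeq lamm σ2 l δ ε (k + 1)) ^ 3 ≤
      (l + δ - sSeq lamm σ2 l δ ε k) ^ 3 - (3 * c * ε - 3 * c ^ 2 * ε ^ 2 / δ ^ 3) := by
  set u : ℝ := l + δ - sSeq lamm σ2 l δ ε k with hu
  have hu0 : 0 < u := lt_of_lt_of_le hδ hw
  have hc0 : 0 < c := by
    rw [hc]
    apply div_pos (by positivity) (by linarith)
  have hlne : lamm ≠ 0 := ne_of_lt hlamm
  have hstep : l + δ - sSeq lamm σ2 l δ ε (k + 1) = u - c * ε / u ^ 2 := by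
    show l + δ - (sSeq lamm σ2 l δ ε k - Real.pi ^ 2 * σ2 / (2 * lamm * u ^ 2) * ε)
      = u - c * ε / u ^ 2
    rw [hc]
    field_simp
    ring
  rw [hstep]
  set d : ℝ := c * ε / u ^ 2 with hd
  have hd0 : 0 < d := by positivity
  have hdu : d * u ^ 2 = c * ε := by
    rw [hd, div_mul_cancel₀ _ (pow_pos hu0 2).ne']
  have h4 : u * δ ^ 3 ≤ u ^ 4 := by
    have h3 : δ ^ 3 ≤ u ^ 3 := pow_le_pow_left₀ hδ.le hw 3
    nlinarith
  have hune : u ≠ 0 := ne_of_gt hu0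
  have hq : 3 * c ^ 2 * ε ^ 2 / δ ^ 3 = 3 * d ^ 2 * u ^ 4 / δ ^ 3 := by
    rw [hd]
    field_simp
  rw [hq]
  have hδ3 : (0:ℝ) < δ ^ 3 := by positivity
  have key : 3 * d ^ 2 * u ≤ 3 * d ^ 2 * u ^ 4 / δ ^ 3 := by
    rw [le_div_iff₀ hδ3]
    nlinarith [sq_nonneg d]
  have hcd : 3 * c * ε = 3 * d * u ^ 2 := by rw [hd]; field_simp
  rw [hcd]
  nlinarith [pow_pos hd0 3]

lemma sSeq_cube_bound (lamm σ2 l δ ε : ℝ) (hlamm : lamm < 0) (hσ2 : 0 < σ2)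
    (hδ : 0 < δ) (hε : 0 < ε) (c : ℝ) (hc : c = Real.pi ^ 2 * σ2 / (-2 * lamm))
    (K : ℕ) (H : ∀ j ≤ K, sSeq lamm σ2 l δ ε j < l) :
    ∀ k ≤ K, (l + δ - sSeq lamm σ2 l δ ε k) ^ 3 ≤
      (l + δ) ^ 3 - k * (3 * c * ε - 3 * c ^ 2 * ε ^ 2 / δ ^ 3) := by
  intro k hk
  induction k with
  | zero => simp [sSeq]
  | succ n ih =>
    have hn : n ≤ K := Nat.le_of_succ_le hk
    have ihn := ih hn
    have hwn : δ ≤ l + δ - sSeq lamm σ2 l δ ε n := by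
      have := H n hn
      linarith
    have hstep := sSeq_cube_step lamm σ2 l δ ε hlamm hσ2 hδ hε c hc n hwn
    push_cast
    push_cast at ihn
    linarith

set_option maxHeartbeats 1000000 in
/-- For `l₁ + δ < l₀` the recursion run with `l = l₁` crosses the level `l₁`,
and it does so at a step `K` with `Kε < 1 - γ` for a fixed `γ > 0`, provided `ε`
is small enough. -/
theorem sSeq_crosses_l1
    (lamm σ2 : ℝ) (hlamm : lamm < 0) (hσ2 : 0 < σ2)
    (l0 : ℝ) (hl0 : l0 = (3 * Real.pi ^ 2 * σ2 / (-2 * lamm)) ^ ((1:ℝ)/3))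
    (l1 δ : ℝ) (hl1 : l1 < l0) (hδ : 0 < δ) (hl1δ : l1 + δ < l0) :
    ∃ γ > (0:ℝ), ∃ ε0 > (0:ℝ), ∀ N : ℕ, 1 ≤ N → (1 : ℝ) / N < ε0 →
      {k : ℕ | k ≤ N ∧ l1 ≤ sSeq lamm σ2 l1 δ (1 / (N : ℝ)) k}.Nonempty ∧
      ((sInf {k : ℕ | k ≤ N ∧ l1 ≤ sSeq lamm σ2 l1 δ (1 / (N : ℝ)) k} : ℕ) : ℝ) *
        (1 / (N : ℝ)) < 1 - γ := by
  rcases le_or_gt l1 0 with hl1neg | hl1pos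
  · -- trivial case: s₀ = 0 ≥ l1, so K = 0
    refine ⟨1/2, by norm_num, 1, by norm_num, fun N hN hεlt => ?_⟩
    have h0mem : 0 ∈ {k : ℕ | k ≤ N ∧ l1 ≤ sSeq lamm σ2 l1 δ (1 / (N : ℝ)) k} := by
      exact ⟨Nat.zero_le N, by simpa [sSeq] using hl1neg⟩
    refine ⟨⟨0, h0mem⟩, ?_⟩
    have : sInf {k : ℕ | k ≤ N ∧ l1 ≤ sSeq lamm σ2 l1 δ (1 / (N : ℝ)) k} = 0 :=
      Nat.sInf_eq_zero.mpr (Or.inl h0mem)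
    rw [this]
    norm_num
  · -- main case
    set c : ℝ := Real.pi ^ 2 * σ2 / (-2 * lamm) with hc
    have hc0 : 0 < c := by
      rw [hc]; exact div_pos (by positivity) (by linarith)
    clear_value c
    have hl0cube : l0 ^ 3 = 3 * c := by
      rw [hl0]
      have h3c : (0:ℝ) ≤ 3 * Real.pi ^ 2 * σ2 / (-2 * lamm) := by
        apply div_nonneg (by positivity) (by linarith)
      rw [← Real.rpow_natCast ((3 * Real.pi ^ 2 * σ2 / (-2 * lamm)) ^ ((1:ℝ)/3)) 3,
        ← Real.rpow_mul h3c]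
      norm_num
      rw [hc]
      ring
    have hl1δpos : 0 < l1 + δ := by linarith
    have hV0 : (l1 + δ) ^ 3 < 3 * c := by
      rw [← hl0cube]
      exact pow_lt_pow_left₀ hl1δ hl1δpos.le (by norm_num)
    have hδ3 : (0:ℝ) < δ ^ 3 := by positivity
    have hδV0 : δ ^ 3 < (l1 + δ) ^ 3 := pow_lt_pow_left₀ (by linarith) hδ.le (by norm_num)
    set T0 : ℝ := ((l1 + δ) ^ 3 - δ ^ 3) / (3 * c) with hT0
    have hT0pos : 0 < T0 := div_pos (by linarith) (by linarith)
    have hT0lt : T0 < 1 := by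
      rw [hT0, div_lt_one (by linarith)]
      linarith
    have hT0eq : T0 * (3 * c) = (l1 + δ) ^ 3 - δ ^ 3 := by
      rw [hT0]; field_simp
    clear_value T0
    set α : ℝ := 1 - T0 with hα
    have hαpos : 0 < α := by rw [hα]; linarith
    have hα1 : α < 1 := by rw [hα]; linarith
    have hT0α : T0 = 1 - α := by rw [hα]; ring
    clear_value α
    refine ⟨α/4, by linarith, min (α/4) (α * δ ^ 3 / (8 * c)), ?_, fun N hN hεlt => ?_⟩
    · exact lt_min (by linarith) (by positivity)
    set ε : ℝ := 1 / (N : ℝ) with hεdef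
    have hNpos : (0:ℝ) < N := by exact_mod_cast hN
    have hNne : (N:ℝ) ≠ 0 := ne_of_gt hNpos
    have hεpos : 0 < ε := by rw [hεdef]; positivity
    have hNε : (N : ℝ) * ε = 1 := by rw [hεdef]; field_simp
    have hε1 : ε < α/4 := lt_of_lt_of_le hεlt (min_le_left _ _)
    have hε2 : ε < α * δ ^ 3 / (8 * c) := lt_of_lt_of_le hεlt (min_le_right _ _)
    clear_value ε
    set T' : ℝ := 1 - α/2 with hT'
    have hT'pos : 0 < T' := by rw [hT']; linarith
    have hT'le1 : T' ≤ 1 := by rw [hT']; linarith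
    have hT'lt : T' < 1 - α/4 := by rw [hT']; linarith
    have hT'ε : 1 - 3*α/4 < T' - ε := by rw [hT']; linarith
    clear_value T'
    set Ks : ℕ := ⌊T' * N⌋₊ with hKs
    have hKsle : (Ks : ℝ) ≤ T' * N := Nat.floor_le (by positivity)
    have hKsgt : T' * N - 1 < (Ks : ℝ) := by
      have := Nat.lt_floor_add_one (T' * N)
      linarith
    clear_value Ks
    have hKsN : Ks ≤ N := by
      have h1 : T' * N ≤ 1 * N := mul_le_mul_of_nonneg_right hT'le1 hNpos.le
      have : (Ks : ℝ) ≤ N := by linarith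
      exact_mod_cast this
    -- key existence: some k ≤ Ks with s_k ≥ l1
    have hex : ∃ k ≤ Ks, l1 ≤ sSeq lamm σ2 l1 δ ε k := by
      by_contra hcon
      push_neg at hcon
      have hbound := sSeq_cube_bound lamm σ2 l1 δ ε hlamm hσ2 hδ hεpos c hc Ks
        (fun j hj => hcon j hj) Ks le_rfl
      have hwKs : δ < l1 + δ - sSeq lamm σ2 l1 δ ε Ks := by
        have := hcon Ks le_rfl
        linarith
      have hwcube : δ ^ 3 < (l1 + δ - sSeq lamm σ2 l1 δ ε Ks) ^ 3 :=
        pow_lt_pow_left₀ hwKs hδ.le (by norm_num)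
      have hmain : δ ^ 3 < (l1 + δ) ^ 3 - (Ks : ℝ) * (3 * c * ε - 3 * c ^ 2 * ε ^ 2 / δ ^ 3) :=
        lt_of_lt_of_le hwcube hbound
      -- lower bound on the step b
      have hb : ε * (3 * c - 3 * c * α / 8) ≤ 3 * c * ε - 3 * c ^ 2 * ε ^ 2 / δ ^ 3 := by
        have hε2' : ε * (8 * c) < α * δ ^ 3 :=
          (lt_div_iff₀ (by positivity)).mp hε2
        have h1 : 3 * c ^ 2 * ε ^ 2 / δ ^ 3 ≤ ε * (3 * c * α / 8) := by
          rw [div_le_iff₀ hδ3]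
          have hnn : (0:ℝ) ≤ 3 * c * ε / 8 := by positivity
          have h3 := mul_le_mul_of_nonneg_left hε2'.le hnn
          nlinarith [h3]
        linarith
      have hbpos : 0 < 3 * c - 3 * c * α / 8 := by nlinarith
      -- Ks * ε > T' - ε
      have hKse : T' - ε < (Ks : ℝ) * ε := by
        have h2 : (T' * N - 1) * ε < (Ks : ℝ) * ε := mul_lt_mul_of_pos_right hKsgt hεpos
        nlinarith
      have hKb : (T' - ε) * (3 * c - 3 * c * α / 8) <
          (Ks : ℝ) * (3 * c * ε - 3 * c ^ 2 * ε ^ 2 / δ ^ 3) := by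
        calc (T' - ε) * (3 * c - 3 * c * α / 8)
            < (Ks : ℝ) * ε * (3 * c - 3 * c * α / 8) :=
              mul_lt_mul_of_pos_right hKse hbpos
          _ = (Ks : ℝ) * (ε * (3 * c - 3 * c * α / 8)) := by ring
          _ ≤ (Ks : ℝ) * (3 * c * ε - 3 * c ^ 2 * ε ^ 2 / δ ^ 3) :=
              mul_le_mul_of_nonneg_left hb (Nat.cast_nonneg _)
      have hfin : (l1 + δ) ^ 3 - δ ^ 3 < (T' - ε) * (3 * c - 3 * c * α / 8) := by
        rw [← hT0eq, hT0α]
        nlinarith [mul_pos hc0 hαpos, sq_nonneg α]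
      linarith
    obtain ⟨k, hkKs, hkcross⟩ := hex
    set S : Set ℕ := {m : ℕ | m ≤ N ∧ l1 ≤ sSeq lamm σ2 l1 δ ε m} with hS
    have hkmem : k ∈ S := ⟨le_trans hkKs hKsN, hkcross⟩
    refine ⟨⟨k, hkmem⟩, ?_⟩
    have hinf : sInf S ≤ Ks := le_trans (Nat.sInf_le hkmem) hkKs
    have hinfKs : ((sInf S : ℕ) : ℝ) ≤ (Ks : ℝ) := by exact_mod_cast hinf
    have hKsT' : (Ks : ℝ) * ε ≤ T' := by nlinarith
    have hinf0 : (0:ℝ) ≤ ((sInf S : ℕ) : ℝ) := Nat.cast_nonneg _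
    have hmono : ((sInf S : ℕ) : ℝ) * ε ≤ (Ks : ℝ) * ε :=
      mul_le_mul_of_nonneg_right hinfKs hεpos.le
    linarith
end
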